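/- Let V be a real topological vector space, let q : V → ℝ be a continuous weak Minkowski norm, and let P := { p ∈ V' | ⟨p,x⟩ ≤ q(x) for all x ∈ V }. A function f : V → ℝ is nonexpansive with respect to q if, and only if, for every x ∈ V, f(x) = max_{y ∈ V} min_{p ∈ P} ( ⟨p,x−y⟩ + f(y) ), where the inner minimum over P is attained for each y and the outer supremum over y is attained. -/

import Mathlib

/-- dual maximin version: With `P` the set of continuous linear forms dominated
by a continuous weak Minkowski norm `q`, a function `f : V → ℝ` is nonexpansive with respect
to `q` if and only if, for every `x`, `f x = max_{y} min_{p ∈ P} (p (x - y) + f y)`, the inner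
minimum over `P` being attained for each `y` and the outer maximum over `y` being attained. -/
theorem stmt5 {V : Type*} [AddCommGroup V] [Module ℝ V] [TopologicalSpace V]
    [IsTopologicalAddGroup V] [ContinuousSMul ℝ V]
    (q : V → ℝ) (hq_convex : ConvexOn ℝ Set.univ q)
    (hq_hom : ∀ (c : ℝ), 0 ≤ c → ∀ x : V, q (c • x) = c * q x)
    (hq_cont : Continuous q) (f : V → ℝ) :
    (∀ x y : V, f x - f y ≤ q (x - y)) ↔
      ∀ x : V,
        (∀ y : V, ∃ r : ℝ,
          IsLeast {s : ℝ | ∃ p : V →L[ℝ] ℝ, (∀ z : V, p z ≤ q z) ∧ s = p (x - y) + f y} r) ∧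
        IsGreatest {r : ℝ | ∃ y : V,
          IsLeast {s : ℝ | ∃ p : V →L[ℝ] ℝ, (∀ z : V, p z ≤ q z) ∧ s = p (x - y) + f y} r}
          (f x) := by
  have hq0 : q 0 = 0 := by
    have := hq_hom 0 le_rfl 0
    simpa using this
  have hq_add : ∀ x y : V, q (x + y) ≤ q x + q y := by
    intro x y
    have h1 := hq_convex.2 (Set.mem_univ x) (Set.mem_univ y)
      (by norm_num : (0:ℝ) ≤ 1/2) (by norm_num : (0:ℝ) ≤ 1/2) (by norm_num)
    simp only [smul_eq_mul] at h1
    have h2 := hq_hom 2 (by norm_num) ((1/2 : ℝ) • x + (1/2 : ℝ) • y)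
    have h3 : (2:ℝ) • ((1/2:ℝ) • x + (1/2:ℝ) • y) = x + y := by
      rw [smul_add, smul_smul, smul_smul]; norm_num
    rw [h3] at h2
    rw [h2]; linarith
  have hnn : ∀ w : V, 0 ≤ q w + q (-w) := by
    intro w
    have := hq_add w (-w)
    simpa [hq0] using this
  -- Hahn-Banach: for each v, a continuous linear functional dominated by q attaining q at v
  have key : ∀ v : V, ∃ p : V →L[ℝ] ℝ, (∀ z : V, p z ≤ q z) ∧ p v = q v := by
    intro v
    obtain ⟨g, hg1, hg2⟩ : ∃ g : V →ₗ[ℝ] ℝ, (∀ z : V, g z ≤ q z) ∧ g v = q v := by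
      by_cases hv : v = 0
      · obtain ⟨g, hgeq, hgle⟩ := exists_extension_of_le_sublinear ⟨⊥, 0⟩ q
          (fun c hc x => hq_hom c hc.le x) hq_add
          (fun x => by
            obtain ⟨x, hx⟩ := x
            simp only [Submodule.mem_bot] at hx
            subst hx
            simp [hq0])
        exact ⟨g, hgle, by subst hv; simp [hq0]⟩
      · obtain ⟨g, hgeq, hgle⟩ := exists_extension_of_le_sublinear
          (LinearPMap.mkSpanSingleton (K := ℝ) v (q v) hv) q
          (fun c hc x => hq_hom c hc.le x) hq_add
          (fun x => by
            obtain ⟨x, hx⟩ := x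
            rw [LinearPMap.domain_mkSpanSingleton] at hx
            obtain ⟨c, rfl⟩ := Submodule.mem_span_singleton.mp hx
            rw [LinearPMap.mkSpanSingleton'_apply]
            show c • q v ≤ q (c • v)
            rcases le_or_gt 0 c with h | h
            · rw [hq_hom c h v, smul_eq_mul]
            · have hcv : c • v = (-c) • (-v) := by simp
              rw [hcv, hq_hom (-c) (by linarith) (-v), smul_eq_mul]
              nlinarith [hnn v])
        refine ⟨g, hgle, ?_⟩
        have := hgeq ⟨v, by
          rw [LinearPMap.domain_mkSpanSingleton]
          exact Submodule.mem_span_singleton_self v⟩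
        rw [this]
        exact LinearPMap.mkSpanSingleton_apply ℝ ℝ hv (q v)
    have cont : Continuous g := by
      refine continuous_of_continuousAt_zero g.toAddMonoidHom ?_
      have hub : Filter.Tendsto (fun x : V => q x) (nhds 0) (nhds 0) := by
        simpa [hq0] using hq_cont.tendsto 0
      have hlb : Filter.Tendsto (fun x : V => -q (-x)) (nhds 0) (nhds 0) := by
        have h := (hq_cont.comp continuous_neg).tendsto 0
        simp only [Function.comp_def, neg_zero, hq0] at h
        simpa using h.neg
      have hsq : Filter.Tendsto (fun x : V => g x) (nhds 0) (nhds 0) :=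
        tendsto_of_tendsto_of_tendsto_of_le_of_le hlb hub
          (fun x => by
            have h1 := hg1 (-x)
            rw [map_neg] at h1
            linarith)
          (fun x => hg1 x)
      simpa [ContinuousAt] using hsq
    exact ⟨⟨g, cont⟩, hg1, hg2⟩
  -- the inner minimum is f y - q (y - x)
  have inner : ∀ x y : V,
      IsLeast {s : ℝ | ∃ p : V →L[ℝ] ℝ, (∀ z : V, p z ≤ q z) ∧ s = p (x - y) + f y}
        (f y - q (y - x)) := by
    intro x y
    obtain ⟨p, hp, hpv⟩ := key (y - x)
    constructor
    · refine ⟨p, hp, ?_⟩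
      have : p (x - y) = -q (y - x) := by
        rw [← neg_sub y x, map_neg, hpv]
      rw [this]; ring
    · rintro s ⟨p', hp', rfl⟩
      have h1 : p' (y - x) ≤ q (y - x) := hp' _
      have h2 : p' (x - y) = -p' (y - x) := by rw [← neg_sub y x, map_neg]
      linarith
  constructor
  · intro hf x
    refine ⟨fun y => ⟨f y - q (y - x), inner x y⟩, ?_, ?_⟩
    · refine ⟨x, ?_⟩
      have := inner x x
      simpa [hq0] using this
    · rintro r ⟨y, hr⟩
      have hru : r = f y - q (y - x) := hr.unique (inner x y)
      have := hf y x
      linarith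
  · intro h x y
    have hub := (h y).2.2
    have hmem : f x - q (x - y) ∈ {r : ℝ | ∃ y' : V,
        IsLeast {s : ℝ | ∃ p : V →L[ℝ] ℝ, (∀ z : V, p z ≤ q z) ∧ s = p (y - y') + f y'} r} :=
      ⟨x, inner y x⟩
    have := hub hmem
    linarith
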